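/- Deterministic version of Proposition 1: Suppose L, L_m, L_{n-m} : ℝ^p → ℝ satisfy sup_w |L_m(w) - L(w)| ≤ V_m, sup_w |L_{n-m}(w) - L(w)| ≤ V_{n-m}, and sup_w |L_n(w) - L(w)| ≤ V_n, where L_n = (m/n)L_m + ((n-m)/n)L_{n-m}, 0 < m < n, 0 < V_n ≤ V_m. Let c > 0, let w* minimize L, define R_k(w) = L_k(w) + (c V_k/2)‖w‖² for k ∈ {m, n} with minimizers w_m*, w_n*, and suppose w_m satisfies R_m(w_m) - R_m(w_m*) ≤ δ_m. Then R_n(w_m) - R_n(w_n*) ≤ δ_m + (2(n-m)/n)(V_{n-m} + V_m) + 2(V_m - V_n) + (c(V_m - V_n)/2)‖w*‖². -/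
import Mathlib


/-- Deterministic (pointwise) version of Proposition 1. -/
theorem stmt_8 {p : ℕ} (L Lm Lnm Ln : EuclideanSpace ℝ (Fin p) → ℝ)
    (m n : ℕ) (hm : 0 < m) (hmn : m < n)
    (Vm Vnm Vn c δm : ℝ) (hVn : 0 < Vn) (hVnVm : Vn ≤ Vm) (hc : 0 < c) (hδm : 0 ≤ δm)
    (hLm : ∀ w, |Lm w - L w| ≤ Vm)
    (hLnm : ∀ w, |Lnm w - L w| ≤ Vnm)
    (hLnL : ∀ w, |Ln w - L w| ≤ Vn)
    (hLn : ∀ w, Ln w = ((m : ℝ) / n) * Lm w + (((n : ℝ) - m) / n) * Lnm w)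
    (wstar : EuclideanSpace ℝ (Fin p)) (hwstar : ∀ w, L wstar ≤ L w)
    (Rm Rn : EuclideanSpace ℝ (Fin p) → ℝ)
    (hRm : ∀ w, Rm w = Lm w + (c * Vm / 2) * ‖w‖ ^ 2)
    (hRn : ∀ w, Rn w = Ln w + (c * Vn / 2) * ‖w‖ ^ 2)
    (wmstar : EuclideanSpace ℝ (Fin p)) (hwmstar : ∀ w, Rm wmstar ≤ Rm w)
    (wnstar : EuclideanSpace ℝ (Fin p)) (hwnstar : ∀ w, Rn wnstar ≤ Rn w)
    (wm : EuclideanSpace ℝ (Fin p)) (hwm : Rm wm - Rm wmstar ≤ δm) :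
    Rn wm - Rn wnstar ≤ δm + (2 * ((n : ℝ) - m) / n) * (Vnm + Vm)
      + 2 * (Vm - Vn) + (c * (Vm - Vn) / 2) * ‖wstar‖ ^ 2 := by
  have hn0 : (0:ℝ) < n := by exact_mod_cast hm.trans hmn
  have hmn' : (m:ℝ) < n := by exact_mod_cast hmn
  have hcoef : 0 ≤ ((n:ℝ) - m) / n := div_nonneg (by linarith) hn0.le
  set A : ℝ := ((n:ℝ) - m) / n * (Vnm + Vm) with hA
  have hdiff : ∀ w, |Ln w - Lm w| ≤ A := by
    intro w
    have he : Ln w - Lm w = ((n:ℝ) - m) / n * (Lnm w - Lm w) := by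
      rw [hLn]; field_simp; ring
    rw [he, abs_mul, abs_of_nonneg hcoef]
    have h1 : |Lnm w - Lm w| ≤ Vnm + Vm := by
      have h2 := hLnm w
      have h3 := hLm w
      calc |Lnm w - Lm w| ≤ |Lnm w - L w| + |L w - Lm w| := abs_sub_le _ _ _
        _ ≤ Vnm + Vm := by rw [abs_sub_comm (L w)]; linarith
    exact mul_le_mul_of_nonneg_left h1 hcoef
  set a := ‖wm‖ ^ 2 with ha'
  set b := ‖wnstar‖ ^ 2 with hb'
  set s := ‖wstar‖ ^ 2 with hs'
  have ha : 0 ≤ a := sq_nonneg _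
  have hb : 0 ≤ b := sq_nonneg _
  have hs : 0 ≤ s := sq_nonneg _
  -- norm bound: c*b ≤ 4 + c*s
  have hnorm : c * b ≤ 4 + c * s := by
    have h := hwnstar wstar
    rw [hRn wnstar, hRn wstar] at h
    have a1 := abs_le.1 (hLnL wstar)
    have a2 := abs_le.1 (hLnL wnstar)
    have a3 := hwstar wnstar
    have h2 : c * Vn / 2 * b - c * Vn / 2 * s ≤ 2 * Vn := by
      simp only [← hb', ← hs'] at h ⊢; linarith
    nlinarith [mul_pos hc hVn]
  have hd1 := abs_le.1 (hdiff wm)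
  have hd2 := abs_le.1 (hdiff wnstar)
  have hsub : Lm wm + c * Vm / 2 * a - (Lm wnstar + c * Vm / 2 * b) ≤ δm := by
    have h1 := hwmstar wnstar
    rw [hRm wm, hRm wmstar] at hwm
    rw [hRm wnstar, hRm wmstar] at h1
    simp only [← ha', ← hb'] at *; linarith
  rw [hRn wm, hRn wnstar]
  simp only [← ha', ← hb', ← hs']
  have k1 : 0 ≤ c * ((Vm - Vn) * a) :=
    mul_nonneg hc.le (mul_nonneg (by linarith) ha)
  have k2 : (Vm - Vn) * (c * b) ≤ (Vm - Vn) * (4 + c * s) :=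
    mul_le_mul_of_nonneg_left hnorm (by linarith)
  have hAe : A * 2 = 2 * ((n:ℝ) - m) / n * (Vnm + Vm) := by rw [hA]; ring
  linarith [k1, k2, hd1.2, hd2.1, hsub, hAe]
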